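/- Second derivative identity along trajectories for the special model: Let (ω, ρ) be a classical solution of the special model on [0,T) with flow map Φ. Then for every x ∈ (0,1), the function t ↦ log(1/Φ(x,t)) is twice differentiable on [0,T) and d²/dt² log(1/Φ(x,t)) = ∫_{Φ(x,t)}^{1} ω(y,t)²/y dy + ∫_{Φ(x,t)}^{1} ρ(y,t)/y² dy; in particular this second derivative is nonnegative. -/

import Mathlib

open MeasureTheory Set Topology

/-- The Biot–Savart velocity of the special (sign-definite) model:
`u(x,t) = −x·∫_x^1 ω(y,t)/y dy`. -/
noncomputable def svel (ω : ℝ → ℝ → ℝ) (x t : ℝ) : ℝ :=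
  -(x * ∫ y in x..(1:ℝ), ω y t / y)

/-- A classical solution of the special model on `(0,1) × [0,T)`, with its flow map `Φ`. -/
structure IsClassicalSolutionSpecial (T : ℝ) (ω ρ Φ : ℝ → ℝ → ℝ) : Prop where
  Tpos : 0 < T
  omega_smooth : ContDiffOn ℝ 1 (fun p : ℝ × ℝ => ω p.1 p.2) (Set.Ioo 0 1 ×ˢ Set.Ico 0 T)
  rho_smooth : ContDiffOn ℝ 1 (fun p : ℝ × ℝ => ρ p.1 p.2) (Set.Ioo 0 1 ×ˢ Set.Ico 0 T)
  omega_nonneg : ∀ x t, 0 ≤ ω x t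
  rho_nonneg : ∀ x t, 0 ≤ ρ x t
  supp : ∀ t, 0 ≤ t → t < T → ∃ a b : ℝ, 0 < a ∧ a ≤ b ∧ b < 1 ∧
      ∀ x, x ∉ Set.Icc a b → ω x t = 0 ∧ ρ x t = 0
  omega_eq : ∀ x ∈ Set.Ioo (0:ℝ) 1, ∀ t, 0 ≤ t → t < T →
      derivWithin (fun s => ω x s) (Set.Ico 0 T) t
        + svel ω x t * deriv (fun y => ω y t) x = ρ x t / x
  rho_eq : ∀ x ∈ Set.Ioo (0:ℝ) 1, ∀ t, 0 ≤ t → t < T →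
      derivWithin (fun s => ρ x s) (Set.Ico 0 T) t
        + svel ω x t * deriv (fun y => ρ y t) x = 0
  flow_init : ∀ x ∈ Set.Ioo (0:ℝ) 1, Φ x 0 = x
  flow_deriv : ∀ x ∈ Set.Ioo (0:ℝ) 1, ∀ t, 0 ≤ t → t < T →
      HasDerivWithinAt (fun s => Φ x s) (svel ω (Φ x t) t) (Set.Ico 0 T) t
  flow_mono : ∀ t, 0 ≤ t → t < T → StrictMonoOn (fun x => Φ x t) (Set.Ioo 0 1)
  flow_bij : ∀ t, 0 ≤ t → t < T → Set.BijOn (fun x => Φ x t) (Set.Ioo 0 1) (Set.Ioo 0 1)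

private lemma sdi_uds {T : ℝ} :
    UniqueDiffOn ℝ ((Set.Ioo (0:ℝ) 1) ×ˢ (Set.Ico (0:ℝ) T)) :=
  (isOpen_Ioo.uniqueDiffOn).prod (uniqueDiffOn_Ico 0 T)

private lemma sdi_slice {T : ℝ} {f : ℝ → ℝ → ℝ}
    (hf : ContDiffOn ℝ 1 (fun p : ℝ × ℝ => f p.1 p.2) (Set.Ioo 0 1 ×ˢ Set.Ico 0 T))
    {y t : ℝ} (hy : y ∈ Set.Ioo (0:ℝ) 1) (ht : t ∈ Set.Ico (0:ℝ) T) :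
    HasDerivAt (fun z => f z t) (deriv (fun z => f z t) y) y ∧
    HasDerivWithinAt (fun s => f y s) (derivWithin (fun s => f y s) (Set.Ico 0 T) t)
      (Set.Ico 0 T) t ∧
    ∀ v w : ℝ, fderivWithin ℝ (fun p : ℝ × ℝ => f p.1 p.2) (Set.Ioo 0 1 ×ˢ Set.Ico 0 T) (y,t) (v,w)
      = v * deriv (fun z => f z t) y + w * derivWithin (fun s => f y s) (Set.Ico 0 T) t := by
  set S := Set.Ioo (0:ℝ) 1 ×ˢ Set.Ico (0:ℝ) T with hS
  have hpt : (y, t) ∈ S := ⟨hy, ht⟩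
  have hdiff : DifferentiableOn ℝ (fun p : ℝ × ℝ => f p.1 p.2) S :=
    hf.differentiableOn one_ne_zero
  set L := fderivWithin ℝ (fun p : ℝ × ℝ => f p.1 p.2) S (y, t) with hL
  have hF : HasFDerivWithinAt (fun p : ℝ × ℝ => f p.1 p.2) L S (y, t) :=
    (hdiff (y, t) hpt).hasFDerivWithinAt
  have hj1 : HasDerivWithinAt (fun z => ((z, t) : ℝ × ℝ)) ((1:ℝ), (0:ℝ)) (Set.Ioo 0 1) y :=
    (hasDerivWithinAt_id y _).prodMk (hasDerivWithinAt_const y _ t)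
  have hmap1 : Set.MapsTo (fun z => ((z, t) : ℝ × ℝ)) (Set.Ioo 0 1) S :=
    fun z hz => ⟨hz, ht⟩
  have hsp : HasDerivWithinAt (fun z => f z t) (L (1, 0)) (Set.Ioo 0 1) y :=
    by have := hF.comp_hasDerivWithinAt y hj1 hmap1; exact this
  have hspA : HasDerivAt (fun z => f z t) (L (1, 0)) y :=
    hsp.hasDerivAt (isOpen_Ioo.mem_nhds hy)
  have hd1 : deriv (fun z => f z t) y = L (1, 0) := hspA.deriv
  have hj2 : HasDerivWithinAt (fun s => ((y, s) : ℝ × ℝ)) ((0:ℝ), (1:ℝ)) (Set.Ico 0 T) t :=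
    (hasDerivWithinAt_const t _ y).prodMk (hasDerivWithinAt_id t _)
  have hmap2 : Set.MapsTo (fun s => ((y, s) : ℝ × ℝ)) (Set.Ico 0 T) S :=
    fun s hs => ⟨hy, hs⟩
  have hti : HasDerivWithinAt (fun s => f y s) (L (0, 1)) (Set.Ico 0 T) t :=
    hF.comp_hasDerivWithinAt t hj2 hmap2
  have hd2 : derivWithin (fun s => f y s) (Set.Ico 0 T) t = L (0, 1) :=
    hti.derivWithin ((uniqueDiffOn_Ico 0 T) t ht)
  refine ⟨hd1 ▸ hspA, hd2 ▸ hti, fun v w => ?_⟩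
  have hvec : ((v, w) : ℝ × ℝ) = v • ((1:ℝ), (0:ℝ)) + w • ((0:ℝ), (1:ℝ)) := by
    simp [Prod.ext_iff]
  rw [hvec, map_add, L.map_smul, L.map_smul, hd1, hd2]
  simp [smul_eq_mul]

section

variable {T : ℝ} {ω ρ Φ : ℝ → ℝ → ℝ} (hsol : IsClassicalSolutionSpecial T ω ρ Φ)
include hsol

private lemma sdi_flow_mem {x t : ℝ} (hx : x ∈ Set.Ioo (0:ℝ) 1) (ht : t ∈ Set.Ico (0:ℝ) T) :
    Φ x t ∈ Set.Ioo (0:ℝ) 1 := (hsol.flow_bij t ht.1 ht.2).mapsTo hx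

private lemma sdi_flow_contOn {x : ℝ} (hx : x ∈ Set.Ioo (0:ℝ) 1) :
    ContinuousOn (fun s => Φ x s) (Set.Ico 0 T) :=
  fun t ht => (hsol.flow_deriv x hx t ht.1 ht.2).continuousWithinAt

private lemma sdi_comp_deriv {f : ℝ → ℝ → ℝ}
    (hf : ContDiffOn ℝ 1 (fun p : ℝ × ℝ => f p.1 p.2) (Set.Ioo 0 1 ×ˢ Set.Ico 0 T))
    {x t : ℝ} (hx : x ∈ Set.Ioo (0:ℝ) 1) (ht : t ∈ Set.Ico (0:ℝ) T) :
    HasDerivWithinAt (fun s => f (Φ x s) s)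
      (svel ω (Φ x t) t * deriv (fun z => f z t) (Φ x t)
        + derivWithin (fun s => f (Φ x t) s) (Set.Ico 0 T) t) (Set.Ico 0 T) t := by
  have hmem := sdi_flow_mem hsol hx ht
  have hγ : HasDerivWithinAt (fun s => ((Φ x s, s) : ℝ × ℝ)) (svel ω (Φ x t) t, 1)
      (Set.Ico 0 T) t :=
    (hsol.flow_deriv x hx t ht.1 ht.2).prodMk (hasDerivWithinAt_id t _)
  have hmap : Set.MapsTo (fun s => ((Φ x s, s) : ℝ × ℝ)) (Set.Ico 0 T)
      (Set.Ioo 0 1 ×ˢ Set.Ico 0 T) := fun s hs => ⟨sdi_flow_mem hsol hx hs, hs⟩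
  have hF := ((hf.differentiableOn one_ne_zero) (Φ x t, t) ⟨hmem, ht⟩).hasFDerivWithinAt
  have hcomp0 : HasDerivWithinAt ((fun p : ℝ × ℝ => f p.1 p.2) ∘ (fun s => (Φ x s, s)))
      (fderivWithin ℝ (fun p : ℝ × ℝ => f p.1 p.2) (Set.Ioo 0 1 ×ˢ Set.Ico 0 T) (Φ x t, t)
        (svel ω (Φ x t) t, 1)) (Set.Ico 0 T) t := hF.comp_hasDerivWithinAt_of_eq t hγ hmap rfl
  have hcomp : HasDerivWithinAt (fun s => f (Φ x s) s)
      (fderivWithin ℝ (fun p : ℝ × ℝ => f p.1 p.2) (Set.Ioo 0 1 ×ˢ Set.Ico 0 T) (Φ x t, t)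
        (svel ω (Φ x t) t, 1)) (Set.Ico 0 T) t := hcomp0
  have h3 := (sdi_slice hf hmem ht).2.2 (svel ω (Φ x t) t) 1
  rw [one_mul] at h3
  rwa [h3] at hcomp

private lemma sdi_transport {x : ℝ} (hx : x ∈ Set.Ioo (0:ℝ) 1)
    (hw0 : ω x 0 = 0) (hr0 : ρ x 0 = 0) {t : ℝ} (ht : t ∈ Set.Ico (0:ℝ) T) :
    ω (Φ x t) t = 0 ∧ ρ (Φ x t) t = 0 := by
  have hIcc : Set.Icc (0:ℝ) t ⊆ Set.Ico (0:ℝ) T := fun s hs => ⟨hs.1, lt_of_le_of_lt hs.2 ht.2⟩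
  have hmemIcc : ∀ s ∈ Set.Icc (0:ℝ) t, s ∈ Set.Ico (0:ℝ) T := fun s hs => hIcc hs
  -- derivative of composed functions on Ico 0 T is 0 for ρ
  have hrder : ∀ s ∈ Set.Ico (0:ℝ) T,
      HasDerivWithinAt (fun s => ρ (Φ x s) s) 0 (Set.Ico 0 T) s := by
    intro s hs
    have h := sdi_comp_deriv hsol hsol.rho_smooth hx hs
    have heq := hsol.rho_eq (Φ x s) (sdi_flow_mem hsol hx hs) s hs.1 hs.2
    have : svel ω (Φ x s) s * deriv (fun z => ρ z s) (Φ x s)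
        + derivWithin (fun r => ρ (Φ x s) r) (Set.Ico 0 T) s = 0 := by linarith
    rwa [this] at h
  have hmono : ∀ s ∈ Set.Ico (0:ℝ) t, (Set.Ico (0:ℝ) T) ∈ nhdsWithin s (Set.Ici s) := by
    intro s hs
    apply mem_nhdsWithin.2
    exact ⟨Set.Iio T, isOpen_Iio, lt_trans hs.2 ht.2,
      fun z hz => ⟨le_trans hs.1 hz.2, hz.1⟩⟩
  have hrzero : ∀ s ∈ Set.Icc (0:ℝ) t, ρ (Φ x s) s = ρ (Φ x 0) 0 := by
    apply constant_of_has_deriv_right_zero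
    · exact fun s hs => ((hrder s (hmemIcc s hs)).continuousWithinAt).mono hIcc
    · intro s hs
      exact (hrder s (hIcc (Set.Ico_subset_Icc_self hs))).mono_of_mem_nhdsWithin
        (hmono s hs)
  have hr0' : ρ (Φ x 0) 0 = 0 := by rw [hsol.flow_init x hx]; exact hr0
  have hrt : ∀ s ∈ Set.Icc (0:ℝ) t, ρ (Φ x s) s = 0 := fun s hs => (hrzero s hs).trans hr0'
  -- now ω
  have hwder : ∀ s ∈ Set.Icc (0:ℝ) t,
      HasDerivWithinAt (fun s => ω (Φ x s) s) 0 (Set.Ico 0 T) s := by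
    intro s hs
    have hs' := hmemIcc s hs
    have h := sdi_comp_deriv hsol hsol.omega_smooth hx hs'
    have heq := hsol.omega_eq (Φ x s) (sdi_flow_mem hsol hx hs') s hs'.1 hs'.2
    rw [hrt s hs] at heq
    have : svel ω (Φ x s) s * deriv (fun z => ω z s) (Φ x s)
        + derivWithin (fun r => ω (Φ x s) r) (Set.Ico 0 T) s = 0 := by
      rw [zero_div] at heq; linarith
    rwa [this] at h
  have hwzero : ∀ s ∈ Set.Icc (0:ℝ) t, ω (Φ x s) s = ω (Φ x 0) 0 := by
    apply constant_of_has_deriv_right_zero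
    · exact fun s hs => ((hwder s hs).continuousWithinAt).mono hIcc
    · intro s hs
      exact (hwder s (Set.Ico_subset_Icc_self hs)).mono_of_mem_nhdsWithin (hmono s hs)
  have hw0' : ω (Φ x 0) 0 = 0 := by rw [hsol.flow_init x hx]; exact hw0
  have htm : t ∈ Set.Icc (0:ℝ) t := Set.right_mem_Icc.2 ht.1
  exact ⟨(hwzero t htm).trans hw0', hrt t htm⟩

private lemma sdi_unif_supp {t₂ : ℝ} (ht₂ : 0 ≤ t₂) (ht₂T : t₂ < T) :
    ∃ β : ℝ, 0 < β ∧ β < 1 ∧ ∀ t ∈ Set.Icc (0:ℝ) t₂, ∀ y, β ≤ y →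
      ω y t = 0 ∧ ρ y t = 0 := by
  obtain ⟨a, b, ha, hab, hb1, hsupp⟩ := hsol.supp 0 le_rfl hsol.Tpos
  have hbmem : b ∈ Set.Ioo (0:ℝ) 1 := ⟨lt_of_lt_of_le ha hab, hb1⟩
  have hIccsub : Set.Icc (0:ℝ) t₂ ⊆ Set.Ico (0:ℝ) T :=
    fun s hs => ⟨hs.1, lt_of_le_of_lt hs.2 ht₂T⟩
  have hcont : ContinuousOn (fun s => Φ b s) (Set.Icc 0 t₂) :=
    (sdi_flow_contOn hsol hbmem).mono hIccsub
  obtain ⟨s₀, hs₀, hmax'⟩ := isCompact_Icc.exists_isMaxOn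
    (Set.nonempty_Icc.2 ht₂) hcont
  have hmax : ∀ s ∈ Set.Icc (0:ℝ) t₂, Φ b s ≤ Φ b s₀ := fun s hs => hmax' hs
  set M := Φ b s₀ with hM
  have hM1 : M < 1 := (sdi_flow_mem hsol hbmem (hIccsub hs₀)).2
  have hM0 : 0 < M := (sdi_flow_mem hsol hbmem (hIccsub hs₀)).1
  refine ⟨(M + 1) / 2, by linarith, by linarith, ?_⟩
  intro t htmem y hy
  have htT : t ∈ Set.Ico (0:ℝ) T := hIccsub htmem
  by_cases hylt : y < 1
  · have hymem : y ∈ Set.Ioo (0:ℝ) 1 := ⟨by linarith, hylt⟩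
    obtain ⟨z, hz, hzy⟩ := (hsol.flow_bij t htT.1 htT.2).surjOn hymem
    have hzb : b < z := by
      by_contra hle
      push_neg at hle
      have : Φ z t ≤ Φ b t := by
        rcases eq_or_lt_of_le hle with h | h
        · rw [h]
        · exact le_of_lt ((hsol.flow_mono t htT.1 htT.2) hz hbmem h)
      have hbM : Φ b t ≤ M := hmax t htmem
      simp only at hzy
      rw [hzy] at this
      linarith
    have hz0 : ω z 0 = 0 ∧ ρ z 0 = 0 := hsupp z (fun h => (not_lt.2 h.2) hzb)
    have := sdi_transport hsol hz hz0.1 hz0.2 htT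
    simp only at hzy
    rwa [hzy] at this
  · obtain ⟨a', b', _, _, hb'1, hsupp'⟩ := hsol.supp t htT.1 htT.2
    exact hsupp' y (fun h => absurd (lt_of_le_of_lt h.2 hb'1) hylt)

private lemma sdi_vanish {t : ℝ} (ht : t ∈ Set.Ico (0:ℝ) T) :
    ∃ b, b < 1 ∧ ∀ z, b < z → ω z t = 0 ∧ ρ z t = 0 := by
  obtain ⟨a, b, _, _, hb1, hsupp⟩ := hsol.supp t ht.1 ht.2
  exact ⟨b, hb1, fun z hz => hsupp z (fun h => absurd h.2 (not_le.2 hz))⟩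

private lemma sdi_slice_contAt {t y₀ : ℝ} (ht : t ∈ Set.Ico (0:ℝ) T) (hy₀ : 0 < y₀) :
    ContinuousAt (fun y => ω y t) y₀ ∧ ContinuousAt (fun y => ρ y t) y₀ := by
  by_cases h1 : y₀ < 1
  · have key : ∀ (f : ℝ → ℝ → ℝ), ContDiffOn ℝ 1 (fun p : ℝ × ℝ => f p.1 p.2)
        (Set.Ioo 0 1 ×ˢ Set.Ico 0 T) → ContinuousAt (fun y => f y t) y₀ := by
      intro f hf
      have hcont : ContinuousOn (fun y => f y t) (Set.Ioo 0 1) := by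
        have := hf.continuousOn.comp
          ((continuous_id.prodMk continuous_const).continuousOn :
            ContinuousOn (fun y : ℝ => ((y, t) : ℝ × ℝ)) (Set.Ioo 0 1))
          (fun z hz => ⟨hz, ht⟩)
        exact this
      exact hcont.continuousAt (isOpen_Ioo.mem_nhds ⟨hy₀, h1⟩)
    exact ⟨key ω hsol.omega_smooth, key ρ hsol.rho_smooth⟩
  · obtain ⟨b, hb1, hvan⟩ := sdi_vanish hsol ht
    have hmem : Set.Ioi b ∈ 𝓝 y₀ := isOpen_Ioi.mem_nhds (lt_of_lt_of_le hb1 (not_lt.1 h1))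
    constructor
    · exact Filter.EventuallyEq.continuousAt
        (Filter.eventually_of_mem hmem (fun z hz => (hvan z hz).1))
    · exact Filter.EventuallyEq.continuousAt
        (Filter.eventually_of_mem hmem (fun z hz => (hvan z hz).2))

private lemma sdi_W_one {y s : ℝ} (hs : s ∈ Set.Ico (0:ℝ) T) (hy : 1 ≤ y) :
    derivWithin (fun r => ω y r) (Set.Ico 0 T) s = 0 := by
  have hzero : ∀ r ∈ Set.Ico (0:ℝ) T, ω y r = 0 := by
    intro r hr
    obtain ⟨b, hb1, hvan⟩ := sdi_vanish hsol hr
    exact (hvan y (lt_of_lt_of_le hb1 hy)).1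
  have hev : (fun r => ω y r) =ᶠ[nhdsWithin s (Set.Ico 0 T)] (fun _ => (0:ℝ)) :=
    Filter.eventually_of_mem self_mem_nhdsWithin (fun r hr => hzero r hr)
  rw [hev.derivWithin_eq (hzero s hs)]
  exact congrFun (derivWithin_const _ _) s

private lemma sdi_W_contAt {t₀ y₀ : ℝ} (ht₀ : t₀ ∈ Set.Ico (0:ℝ) T)
    (hy₀ : y₀ ∈ Set.Ioo (0:ℝ) 1) :
    ContinuousAt (fun y => derivWithin (fun s => ω y s) (Set.Ico 0 T) t₀) y₀ := by
  have hG : ContinuousOn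
      (fun p : ℝ × ℝ => fderivWithin ℝ (fun q : ℝ × ℝ => ω q.1 q.2)
        (Set.Ioo 0 1 ×ˢ Set.Ico 0 T) p)
      (Set.Ioo 0 1 ×ˢ Set.Ico 0 T) :=
    hsol.omega_smooth.continuousOn_fderivWithin sdi_uds le_rfl
  have hGa : ContinuousOn
      (fun p : ℝ × ℝ => fderivWithin ℝ (fun q : ℝ × ℝ => ω q.1 q.2)
        (Set.Ioo 0 1 ×ˢ Set.Ico 0 T) p ((0:ℝ), (1:ℝ)))
      (Set.Ioo 0 1 ×ˢ Set.Ico 0 T) := hG.clm_apply continuousOn_const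
  have hcomp : ContinuousOn
      (fun y : ℝ => fderivWithin ℝ (fun q : ℝ × ℝ => ω q.1 q.2)
        (Set.Ioo 0 1 ×ˢ Set.Ico 0 T) (y, t₀) ((0:ℝ), (1:ℝ))) (Set.Ioo 0 1) := by
    have := hGa.comp
      ((continuous_id.prodMk continuous_const).continuousOn :
        ContinuousOn (fun y : ℝ => ((y, t₀) : ℝ × ℝ)) (Set.Ioo 0 1))
      (fun z hz => ⟨hz, ht₀⟩)
    exact this
  have hCA := hcomp.continuousAt (isOpen_Ioo.mem_nhds hy₀)
  apply hCA.congr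
  apply Filter.eventually_of_mem (isOpen_Ioo.mem_nhds hy₀)
  intro y hy
  have h := (sdi_slice hsol.omega_smooth hy ht₀).2.2 0 1
  simpa using h

private lemma sdi_param_deriv {t₀ c d : ℝ} (ht₀ : t₀ ∈ Set.Ico (0:ℝ) T)
    (hc : 0 < c) (hcd : c ≤ d) (hd1 : d ≤ 1) :
    HasDerivWithinAt (fun t => ∫ y in c..d, ω y t / y)
      (∫ y in c..d, derivWithin (fun s => ω y s) (Set.Ico 0 T) t₀ / y) (Set.Ico 0 T) t₀ := by
  obtain ⟨ht₀0, ht₀T⟩ := ht₀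
  set W : ℝ → ℝ → ℝ := fun y s => derivWithin (fun r => ω y r) (Set.Ico 0 T) s with hWdef
  set t₂ := (t₀ + T) / 2 with ht₂def
  have ht₀t₂ : t₀ < t₂ := by rw [ht₂def]; linarith
  have ht₂T : t₂ < T := by rw [ht₂def]; linarith
  have ht₂0 : 0 ≤ t₂ := le_of_lt (lt_of_le_of_lt ht₀0 ht₀t₂)
  set t₁ := (t₀ + t₂) / 2 with ht₁def
  have h01 : t₀ < t₁ := by rw [ht₁def]; linarith
  have h1t₂ : t₁ < t₂ := by rw [ht₁def]; linarith
  have h1T : t₁ < T := lt_trans h1t₂ ht₂T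
  obtain ⟨β, hβ0, hβ1, hβ⟩ := sdi_unif_supp hsol ht₂0 ht₂T
  have ht₀Icc : t₀ ∈ Set.Icc (0:ℝ) t₁ := ⟨ht₀0, le_of_lt h01⟩
  -- W vanishes for y ≥ β on the time window [0, t₁]
  have hWvan : ∀ y, β ≤ y → ∀ s ∈ Set.Icc (0:ℝ) t₁, W y s = 0 := by
    intro y hy s hs
    have hsT : s ∈ Set.Ico (0:ℝ) T := ⟨hs.1, lt_of_le_of_lt hs.2 h1T⟩
    have hmem : Set.Iio t₂ ∩ Set.Ico 0 T ∈ 𝓝[Set.Ico (0:ℝ) T] s :=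
      Filter.inter_mem
        (mem_nhdsWithin_of_mem_nhds (Iio_mem_nhds (lt_of_le_of_lt hs.2 h1t₂)))
        self_mem_nhdsWithin
    have hev : (fun r => ω y r) =ᶠ[𝓝[Set.Ico (0:ℝ) T] s] (fun _ => (0:ℝ)) :=
      Filter.eventually_of_mem hmem
        (fun r hr => (hβ r ⟨hr.2.1, le_of_lt hr.1⟩ y hy).1)
    rw [hWdef]
    simp only
    rw [hev.derivWithin_eq ((hβ s ⟨hs.1, le_trans hs.2 (le_of_lt h1t₂)⟩ y hy).1)]
    exact congrFun (derivWithin_const _ _) s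
  -- W equals the evaluated fderivWithin on the domain
  have hWeq : ∀ y ∈ Set.Ioo (0:ℝ) 1, ∀ s ∈ Set.Ico (0:ℝ) T,
      W y s = fderivWithin ℝ (fun q : ℝ × ℝ => ω q.1 q.2)
        (Set.Ioo 0 1 ×ˢ Set.Ico 0 T) (y, s) ((0:ℝ), (1:ℝ)) := by
    intro y hy s hs
    have h := (sdi_slice hsol.omega_smooth hy hs).2.2 0 1
    rw [hWdef]; simp only; rw [h]; ring
  -- uniform continuity of the time-derivative on a compact set
  have hGa : ContinuousOn
      (fun p : ℝ × ℝ => fderivWithin ℝ (fun q : ℝ × ℝ => ω q.1 q.2)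
        (Set.Ioo 0 1 ×ˢ Set.Ico 0 T) p ((0:ℝ), (1:ℝ)))
      (Set.Ioo 0 1 ×ˢ Set.Ico 0 T) :=
    (hsol.omega_smooth.continuousOn_fderivWithin sdi_uds le_rfl).clm_apply continuousOn_const
  have hKsub : (Set.Icc c β ×ˢ Set.Icc (0:ℝ) t₁) ⊆ (Set.Ioo (0:ℝ) 1 ×ˢ Set.Ico (0:ℝ) T) := by
    intro p hp
    exact ⟨⟨lt_of_lt_of_le hc hp.1.1, lt_of_le_of_lt hp.1.2 hβ1⟩,
      ⟨hp.2.1, lt_of_le_of_lt hp.2.2 h1T⟩⟩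
  have hUC := (isCompact_Icc.prod isCompact_Icc).uniformContinuousOn_of_continuous
    (hGa.mono hKsub)
  rw [Metric.uniformContinuousOn_iff] at hUC
  -- the key quantitative estimate
  have key : ∀ ε > (0:ℝ), ∃ δ > (0:ℝ), ∀ t ∈ Set.Ico (0:ℝ) T, |t - t₀| < δ →
      |(∫ y in c..d, ω y t / y) - (∫ y in c..d, ω y t₀ / y)
        - (t - t₀) * ∫ y in c..d, W y t₀ / y| ≤ ε * |t - t₀| := by
    intro ε hε
    have hdc1 : (0:ℝ) < d - c + 1 := by linarith
    set ε' := ε * c / (d - c + 1) with hε'def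
    have hε'pos : 0 < ε' := div_pos (mul_pos hε hc) hdc1
    obtain ⟨δ₁, hδ₁pos, hδ₁⟩ := hUC ε' hε'pos
    refine ⟨min δ₁ (t₁ - t₀), lt_min hδ₁pos (by linarith), ?_⟩
    intro t htIco htδ
    have htδ₁ : |t - t₀| < δ₁ := lt_of_lt_of_le htδ (min_le_left _ _)
    have ht_le : t ≤ t₁ := by
      have := (abs_lt.1 (lt_of_lt_of_le htδ (min_le_right _ _))).2
      linarith
    have ht0 : 0 ≤ t := htIco.1
    have htIcc : t ∈ Set.Icc (0:ℝ) t₁ := ⟨ht0, ht_le⟩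
    -- continuity and integrability of slices
    have hcont_t : ∀ u ∈ Set.Ico (0:ℝ) T, ContinuousOn (fun y => ω y u / y) (Set.Icc c d) := by
      intro u hu y hy
      have hy0 : 0 < y := lt_of_lt_of_le hc hy.1
      exact (((sdi_slice_contAt hsol hu hy0).1.div continuousAt_id
        (ne_of_gt hy0))).continuousWithinAt
    have hint_t : IntervalIntegrable (fun y => ω y t / y) volume c d :=
      ((hcont_t t htIco).mono (by rw [Set.uIcc_of_le hcd])).intervalIntegrable
    have hint_t0 : IntervalIntegrable (fun y => ω y t₀ / y) volume c d :=
      ((hcont_t t₀ ⟨ht₀0, ht₀T⟩).mono (by rw [Set.uIcc_of_le hcd])).intervalIntegrable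
    have hWcont : ContinuousOn (fun z => W z t₀ / z) (Set.Icc c d) := by
      intro y hy
      have hy0 : 0 < y := lt_of_lt_of_le hc hy.1
      by_cases hylt : y < 1
      · exact ((sdi_W_contAt hsol ⟨ht₀0, ht₀T⟩ ⟨hy0, hylt⟩).div continuousAt_id
          (ne_of_gt hy0)).continuousWithinAt
      · have hy1 : (1:ℝ) ≤ y := not_lt.1 hylt
        have hmem : Set.Ioi β ∈ 𝓝 y := isOpen_Ioi.mem_nhds (lt_of_lt_of_le hβ1 hy1)
        have hev : (fun z => W z t₀ / z) =ᶠ[𝓝 y] (fun _ => (0:ℝ)) := by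
          apply Filter.eventually_of_mem hmem
          intro z hz
          show W z t₀ / z = 0
          by_cases hz1 : z < 1
          · rw [hWvan z (le_of_lt hz) t₀ ht₀Icc, zero_div]
          · rw [show W z t₀ = 0 from sdi_W_one hsol ⟨ht₀0, ht₀T⟩ (not_lt.1 hz1), zero_div]
        exact (Filter.EventuallyEq.continuousAt hev).continuousWithinAt
    have hint_W : IntervalIntegrable (fun y => W y t₀ / y) volume c d :=
      (hWcont.mono (by rw [Set.uIcc_of_le hcd])).intervalIntegrable
    -- pointwise bound on the combined integrand
    have hptw : ∀ y ∈ Set.uIoc c d,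
        ‖ω y t / y - ω y t₀ / y - (t - t₀) * (W y t₀ / y)‖ ≤ ε' / c * |t - t₀| := by
      intro y hy
      rw [Set.uIoc_of_le hcd] at hy
      have hyc : c < y := hy.1
      have hyd : y ≤ d := hy.2
      have hy0 : 0 < y := lt_trans hc hyc
      have hnum : |ω y t - ω y t₀ - (t - t₀) * W y t₀| ≤ ε' * |t - t₀| := by
        by_cases hyβ : y ≤ β
        · -- mean value argument
          have hyIoo : y ∈ Set.Ioo (0:ℝ) 1 := ⟨hy0, lt_of_le_of_lt hyβ hβ1⟩
          have hkey2 : ∀ A B : ℝ, A ≤ B → A ∈ Set.Icc (0:ℝ) t₁ → B ∈ Set.Icc (0:ℝ) t₁ →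
              (∀ s ∈ Set.Icc A B, |s - t₀| ≤ |t - t₀|) →
              ‖(ω y B - (B - t₀) * W y t₀) - (ω y A - (A - t₀) * W y t₀)‖
                ≤ ε' * (B - A) := by
            intro A B hAB hAIcc hBIcc hclose
            have hABsub : Set.Icc A B ⊆ Set.Ico (0:ℝ) T := fun s hs =>
              ⟨le_trans hAIcc.1 hs.1, lt_of_le_of_lt (le_trans hs.2 hBIcc.2) h1T⟩
            have hf : ∀ s ∈ Set.Icc A B,
                HasDerivWithinAt (fun r => ω y r - (r - t₀) * W y t₀)
                  (W y s - W y t₀) (Set.Icc A B) s := by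
              intro s hs
              have h1 := ((sdi_slice hsol.omega_smooth hyIoo (hABsub hs)).2.1).mono hABsub
              have h2 : HasDerivWithinAt (fun r => (r - t₀) * W y t₀) (W y t₀)
                  (Set.Icc A B) s := by
                simpa using (((hasDerivWithinAt_id s (Set.Icc A B)).sub_const t₀).mul_const
                  (W y t₀))
              exact h1.sub h2
            have hbound : ∀ s ∈ Set.Ico A B, ‖W y s - W y t₀‖ ≤ ε' := by
              intro s hs
              have hsIcc : s ∈ Set.Icc A B := Set.Ico_subset_Icc_self hs
              have hs1 : s ∈ Set.Icc (0:ℝ) t₁ :=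
                ⟨le_trans hAIcc.1 hsIcc.1, le_trans hsIcc.2 hBIcc.2⟩
              have hsT : s ∈ Set.Ico (0:ℝ) T := hABsub hsIcc
              have hst₀ : |s - t₀| < δ₁ := lt_of_le_of_lt (hclose s hsIcc) htδ₁
              have hmem1 : ((y, s) : ℝ × ℝ) ∈ Set.Icc c β ×ˢ Set.Icc (0:ℝ) t₁ :=
                ⟨⟨le_of_lt hyc, hyβ⟩, hs1⟩
              have hmem2 : ((y, t₀) : ℝ × ℝ) ∈ Set.Icc c β ×ˢ Set.Icc (0:ℝ) t₁ :=
                ⟨⟨le_of_lt hyc, hyβ⟩, ht₀Icc⟩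
              have hdist : dist ((y, s) : ℝ × ℝ) ((y, t₀) : ℝ × ℝ) < δ₁ := by
                rw [Prod.dist_eq]
                simp only [dist_self]
                rw [Real.dist_eq, max_eq_right (abs_nonneg _)]
                exact hst₀
              have := hδ₁ (y, s) hmem1 (y, t₀) hmem2 hdist
              rw [Real.dist_eq] at this
              rw [hWeq y hyIoo s hsT, hWeq y hyIoo t₀ ⟨ht₀0, ht₀T⟩]
              exact le_of_lt this
            exact norm_image_sub_le_of_norm_deriv_le_segment' hf hbound B
              (Set.right_mem_Icc.2 hAB)
          rcases le_total t₀ t with h | h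
          · have hmvt := hkey2 t₀ t h ht₀Icc htIcc (by
              intro s hs
              rw [abs_of_nonneg (by linarith [hs.1] : (0:ℝ) ≤ s - t₀),
                abs_of_nonneg (by linarith : (0:ℝ) ≤ t - t₀)]
              linarith [hs.2])
            simp only [sub_self, zero_mul, sub_zero] at hmvt
            calc |ω y t - ω y t₀ - (t - t₀) * W y t₀|
                = ‖(ω y t - (t - t₀) * W y t₀) - ω y t₀‖ := by
                  rw [Real.norm_eq_abs]; ring_nf
              _ ≤ ε' * (t - t₀) := hmvt
              _ = ε' * |t - t₀| := by rw [abs_of_nonneg (by linarith)]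
          · have hmvt := hkey2 t t₀ h htIcc ht₀Icc (by
              intro s hs
              rw [abs_of_nonpos (by linarith [hs.2] : s - t₀ ≤ 0),
                abs_of_nonpos (by linarith : t - t₀ ≤ 0)]
              linarith [hs.1])
            simp only [sub_self, zero_mul, sub_zero] at hmvt
            calc |ω y t - ω y t₀ - (t - t₀) * W y t₀|
                = ‖ω y t₀ - (ω y t - (t - t₀) * W y t₀)‖ := by
                  rw [Real.norm_eq_abs, abs_sub_comm]; ring_nf
              _ ≤ ε' * (t₀ - t) := hmvt
              _ = ε' * |t - t₀| := by rw [abs_sub_comm, abs_of_nonneg (by linarith)]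
        · -- support region
          push_neg at hyβ
          have hyβ' : β ≤ y := le_of_lt hyβ
          have h1 : ω y t = 0 := (hβ t ⟨ht0, le_trans ht_le (le_of_lt h1t₂)⟩ y hyβ').1
          have h2 : ω y t₀ = 0 :=
            (hβ t₀ ⟨ht₀0, le_trans (le_of_lt h01) (le_of_lt h1t₂)⟩ y hyβ').1
          have h3 : W y t₀ = 0 := hWvan y hyβ' t₀ ht₀Icc
          rw [h1, h2, h3]
          simp [mul_nonneg (le_of_lt hε'pos) (abs_nonneg _)]
      have hrw : ω y t / y - ω y t₀ / y - (t - t₀) * (W y t₀ / y)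
          = (ω y t - ω y t₀ - (t - t₀) * W y t₀) / y := by
        field_simp
      rw [hrw, Real.norm_eq_abs, abs_div, abs_of_pos hy0, div_le_iff₀ hy0]
      calc |ω y t - ω y t₀ - (t - t₀) * W y t₀| ≤ ε' * |t - t₀| := hnum
        _ = ε' / c * |t - t₀| * c := by field_simp
        _ ≤ ε' / c * |t - t₀| * y := by
            apply mul_le_mul_of_nonneg_left (le_of_lt hyc)
            positivity
    -- combine
    have hcomb : (∫ y in c..d, ω y t / y) - (∫ y in c..d, ω y t₀ / y)
        - (t - t₀) * ∫ y in c..d, W y t₀ / y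
        = ∫ y in c..d, (ω y t / y - ω y t₀ / y - (t - t₀) * (W y t₀ / y)) := by
      rw [← intervalIntegral.integral_const_mul,
        ← intervalIntegral.integral_sub hint_t hint_t0,
        ← intervalIntegral.integral_sub (hint_t.sub hint_t0) (hint_W.const_mul _)]
    rw [hcomb]
    have hnorm := intervalIntegral.norm_integral_le_of_norm_le_const hptw
    rw [Real.norm_eq_abs] at hnorm
    calc |∫ y in c..d, (ω y t / y - ω y t₀ / y - (t - t₀) * (W y t₀ / y))|
        ≤ ε' / c * |t - t₀| * |d - c| := hnorm
      _ ≤ ε * |t - t₀| := by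
          rw [abs_of_nonneg (by linarith : (0:ℝ) ≤ d - c)]
          have h1 : ε' / c = ε / (d - c + 1) := by
            rw [hε'def]; field_simp
          rw [h1, div_mul_eq_mul_div, div_mul_eq_mul_div, div_le_iff₀ hdc1]
          nlinarith [abs_nonneg (t - t₀), mul_nonneg (le_of_lt hε) (abs_nonneg (t - t₀))]
  -- conclude via little-o characterization
  rw [hasDerivWithinAt_iff_isLittleO, Asymptotics.isLittleO_iff]
  intro C hC
  obtain ⟨δ, hδpos, hkey⟩ := key C hC
  have hball : ∀ᶠ t in 𝓝[Set.Ico (0:ℝ) T] t₀, |t - t₀| < δ := by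
    apply eventually_nhdsWithin_of_eventually_nhds
    apply Filter.eventually_of_mem (Metric.ball_mem_nhds t₀ hδpos)
    intro z hz
    simpa [Real.dist_eq] using hz
  filter_upwards [hball, eventually_mem_nhdsWithin] with t h1 h2
  have hres := hkey t h2 h1
  simpa [smul_eq_mul, Real.norm_eq_abs] using hres

private lemma sdi_endpoint_deriv {x t₀ : ℝ} (hx : x ∈ Set.Ioo (0:ℝ) 1)
    (ht₀ : t₀ ∈ Set.Ico (0:ℝ) T) :
    HasDerivWithinAt (fun t => ∫ y in (Φ x t₀)..(Φ x t), ω y t / y)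
      (svel ω (Φ x t₀) t₀ * (ω (Φ x t₀) t₀ / (Φ x t₀))) (Set.Ico 0 T) t₀ := by
  have ha₀ : Φ x t₀ ∈ Set.Ioo (0:ℝ) 1 := sdi_flow_mem hsol hx ht₀
  set F := 𝓝[Set.Ico (0:ℝ) T] t₀ with hF
  set a : ℝ → ℝ := fun t => Φ x t with ha
  set a₀ : ℝ := Φ x t₀ with ha₀def
  set v : ℝ := svel ω (Φ x t₀) t₀ with hv
  set c₀ : ℝ := ω (Φ x t₀) t₀ / Φ x t₀ with hc₀
  have hflow : HasDerivWithinAt a v (Set.Ico 0 T) t₀ := hsol.flow_deriv x hx t₀ ht₀.1 ht₀.2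
  have haBigO : (fun t => a t - a₀) =O[F] (fun t => t - t₀) := HasFDerivWithinAt.isBigO_sub hflow
  have haCont : Filter.Tendsto a F (𝓝 a₀) := hflow.continuousWithinAt
  -- E2 is little-o
  have hE2o : (fun t => c₀ * (a t - a₀ - (t - t₀) * v)) =o[F] (fun t => t - t₀) := by
    have hbase := hasDerivWithinAt_iff_isLittleO.1 hflow
    simpa [smul_eq_mul] using hbase.const_mul_left c₀
  -- E1 is little-o of (a t - a₀)
  have hE1o : (fun t => (∫ y in a₀..a t, ω y t / y) - (a t - a₀) * c₀)
      =o[F] (fun t => a t - a₀) := by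
    rw [Asymptotics.isLittleO_iff]
    intro ε hε
    -- joint continuity of (y,s) ↦ ω y s / y at (a₀, t₀) within the domain
    have hjoint : ContinuousWithinAt (fun p : ℝ × ℝ => ω p.1 p.2 / p.1)
        (Set.Ioo 0 1 ×ˢ Set.Ico 0 T) (a₀, t₀) :=
      (hsol.omega_smooth.continuousOn (a₀, t₀) ⟨ha₀, ht₀⟩).div
        continuous_fst.continuousWithinAt (ne_of_gt ha₀.1)
    rw [Metric.continuousWithinAt_iff] at hjoint
    obtain ⟨δ₂, hδ₂pos, hδ₂⟩ := hjoint ε hε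
    have hev1 : ∀ᶠ t in F, t ∈ Set.Ico (0:ℝ) T := eventually_mem_nhdsWithin
    have hev2 : ∀ᶠ t in F, dist (a t) a₀ < δ₂ :=
      Metric.tendsto_nhds.1 haCont δ₂ hδ₂pos
    have hev3 : ∀ᶠ t in F, dist t t₀ < δ₂ := by
      apply eventually_nhdsWithin_of_eventually_nhds
      apply Filter.eventually_of_mem (Metric.ball_mem_nhds t₀ hδ₂pos)
      intro z hz; exact hz
    filter_upwards [hev1, hev2, hev3] with t htmem hta htt
    have hat : a t ∈ Set.Ioo (0:ℝ) 1 := sdi_flow_mem hsol hx htmem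
    have hyfacts : ∀ y ∈ Set.uIcc a₀ (a t), y ∈ Set.Ioo (0:ℝ) 1 ∧ |y - a₀| ≤ |a t - a₀| := by
      intro y hy
      rcases le_total a₀ (a t) with h | h
      · rw [Set.uIcc_of_le h] at hy
        refine ⟨⟨lt_of_lt_of_le ha₀.1 hy.1, lt_of_le_of_lt hy.2 hat.2⟩, ?_⟩
        rw [abs_of_nonneg (by linarith [hy.1]), abs_of_nonneg (by linarith)]
        linarith [hy.2]
      · rw [Set.uIcc_of_ge h] at hy
        refine ⟨⟨lt_of_lt_of_le hat.1 hy.1, lt_of_le_of_lt hy.2 ha₀.2⟩, ?_⟩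
        rw [abs_of_nonpos (by linarith [hy.2]), abs_of_nonpos (by linarith)]
        linarith [hy.1]
    have hcontOn : ContinuousOn (fun y => ω y t / y) (Set.uIcc a₀ (a t)) := by
      intro y hy
      obtain ⟨hyIoo, _⟩ := hyfacts y hy
      exact (((sdi_slice_contAt hsol htmem hyIoo.1).1.div continuousAt_id
        (ne_of_gt hyIoo.1))).continuousWithinAt
    have hint1 : IntervalIntegrable (fun y => ω y t / y) volume a₀ (a t) :=
      hcontOn.intervalIntegrable
    have hE1 : (∫ y in a₀..a t, ω y t / y) - (a t - a₀) * c₀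
        = ∫ y in a₀..a t, (ω y t / y - c₀) := by
      rw [intervalIntegral.integral_sub hint1 intervalIntegrable_const,
        intervalIntegral.integral_const, smul_eq_mul]
    rw [hE1]
    have hptw : ∀ y ∈ Set.uIoc a₀ (a t), ‖ω y t / y - c₀‖ ≤ ε := by
      intro y hy
      obtain ⟨hyIoo, hyabs⟩ := hyfacts y (Set.uIoc_subset_uIcc hy)
      have hmemS : ((y, t) : ℝ × ℝ) ∈ Set.Ioo (0:ℝ) 1 ×ˢ Set.Ico (0:ℝ) T := ⟨hyIoo, htmem⟩
      have hdist : dist ((y, t) : ℝ × ℝ) ((a₀, t₀) : ℝ × ℝ) < δ₂ := by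
        rw [Prod.dist_eq]
        apply max_lt
        · rw [Real.dist_eq]
          exact lt_of_le_of_lt hyabs (by rwa [Real.dist_eq] at hta)
        · exact htt
      have := hδ₂ hmemS hdist
      rw [Real.dist_eq] at this
      rw [Real.norm_eq_abs]
      exact le_of_lt this
    calc ‖∫ y in a₀..a t, (ω y t / y - c₀)‖ ≤ ε * |a t - a₀| :=
          intervalIntegral.norm_integral_le_of_norm_le_const hptw
      _ = ε * ‖a t - a₀‖ := by rw [Real.norm_eq_abs]
  -- combine
  rw [hasDerivWithinAt_iff_isLittleO]
  have hsum := (hE1o.trans_isBigO haBigO).add hE2o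
  apply hsum.congr'
  · apply Filter.Eventually.of_forall
    intro t
    simp only [smul_eq_mul]
    have h2 : (∫ (y : ℝ) in a₀..Φ x t₀, ω y t₀ / y) = 0 := intervalIntegral.integral_same
    rw [h2]
    ring
  · exact Filter.EventuallyEq.refl _ _

private lemma sdi_first_deriv {x t : ℝ} (hx : x ∈ Set.Ioo (0:ℝ) 1)
    (ht : t ∈ Set.Ico (0:ℝ) T) :
    HasDerivWithinAt (fun r => Real.log (1 / Φ x r))
      (∫ y in (Φ x t)..(1:ℝ), ω y t / y) (Set.Ico 0 T) t := by
  have hmem := sdi_flow_mem hsol hx ht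
  have hflow := hsol.flow_deriv x hx t ht.1 ht.2
  have hlog : HasDerivWithinAt (fun r => Real.log (Φ x r))
      ((Φ x t)⁻¹ * svel ω (Φ x t) t) (Set.Ico 0 T) t :=
    (Real.hasDerivAt_log (ne_of_gt hmem.1)).comp_hasDerivWithinAt t hflow
  have h1 : HasDerivWithinAt (fun r => -Real.log (Φ x r))
      (-((Φ x t)⁻¹ * svel ω (Φ x t) t)) (Set.Ico 0 T) t := hlog.neg
  have heq : (fun r : ℝ => Real.log (1 / Φ x r)) = fun r => -Real.log (Φ x r) := by
    funext r; rw [one_div, Real.log_inv]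
  rw [heq]
  convert h1 using 1
  rw [svel]
  field_simp
  rw [mul_comm]
  exact (mul_div_cancel_left₀ _ (ne_of_gt hmem.1)).symm

private lemma sdi_dx_contAt {t₀ y₀ : ℝ} (ht₀ : t₀ ∈ Set.Ico (0:ℝ) T)
    (hy₀ : y₀ ∈ Set.Ioo (0:ℝ) 1) :
    ContinuousAt (fun y => deriv (fun z => ω z t₀) y) y₀ := by
  have hGa : ContinuousOn
      (fun p : ℝ × ℝ => fderivWithin ℝ (fun q : ℝ × ℝ => ω q.1 q.2)
        (Set.Ioo 0 1 ×ˢ Set.Ico 0 T) p ((1:ℝ), (0:ℝ)))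
      (Set.Ioo 0 1 ×ˢ Set.Ico 0 T) :=
    (hsol.omega_smooth.continuousOn_fderivWithin sdi_uds le_rfl).clm_apply continuousOn_const
  have hcomp : ContinuousOn
      (fun y : ℝ => fderivWithin ℝ (fun q : ℝ × ℝ => ω q.1 q.2)
        (Set.Ioo 0 1 ×ˢ Set.Ico 0 T) (y, t₀) ((1:ℝ), (0:ℝ))) (Set.Ioo 0 1) := by
    have := hGa.comp
      ((continuous_id.prodMk continuous_const).continuousOn :
        ContinuousOn (fun y : ℝ => ((y, t₀) : ℝ × ℝ)) (Set.Ioo 0 1))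
      (fun z hz => ⟨hz, ht₀⟩)
    exact this
  have hCA := hcomp.continuousAt (isOpen_Ioo.mem_nhds hy₀)
  apply hCA.congr
  apply Filter.eventually_of_mem (isOpen_Ioo.mem_nhds hy₀)
  intro y hy
  have h := (sdi_slice hsol.omega_smooth hy ht₀).2.2 1 0
  simpa using h

end

/-- **Second derivative identity along trajectories for the special model:**
`t ↦ log(1/Φ(x,t))` is twice differentiable on `[0,T)` and
`d²/dt² log(1/Φ(x,t)) = ∫_{Φ(x,t)}^1 ω(y,t)²/y dy + ∫_{Φ(x,t)}^1 ρ(y,t)/y² dy ≥ 0`. -/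
theorem second_derivative_identity (T : ℝ) (ω ρ Φ : ℝ → ℝ → ℝ)
    (hsol : IsClassicalSolutionSpecial T ω ρ Φ) :
    ∀ x ∈ Set.Ioo (0:ℝ) 1, ∀ t, 0 ≤ t → t < T →
      HasDerivWithinAt (fun r => Real.log (1 / Φ x r))
        (derivWithin (fun r => Real.log (1 / Φ x r)) (Set.Ico 0 T) t) (Set.Ico 0 T) t ∧
      HasDerivWithinAt
        (fun s => derivWithin (fun r => Real.log (1 / Φ x r)) (Set.Ico 0 T) s)
        ((∫ y in (Φ x t)..(1:ℝ), (ω y t) ^ 2 / y) + ∫ y in (Φ x t)..(1:ℝ), ρ y t / y ^ 2)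
        (Set.Ico 0 T) t ∧
      0 ≤ (∫ y in (Φ x t)..(1:ℝ), (ω y t) ^ 2 / y) + ∫ y in (Φ x t)..(1:ℝ), ρ y t / y ^ 2 := by
  intro x hx t ht0 htT
  have ht : t ∈ Set.Ico (0:ℝ) T := ⟨ht0, htT⟩
  have huniq := uniqueDiffOn_Ico (0:ℝ) T
  have hfirst : ∀ s ∈ Set.Ico (0:ℝ) T,
      HasDerivWithinAt (fun r => Real.log (1 / Φ x r))
        (∫ y in (Φ x s)..(1:ℝ), ω y s / y) (Set.Ico 0 T) s :=
    fun s hs => sdi_first_deriv hsol hx hs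
  have hdW : ∀ s ∈ Set.Ico (0:ℝ) T,
      derivWithin (fun r => Real.log (1 / Φ x r)) (Set.Ico 0 T) s
        = ∫ y in (Φ x s)..(1:ℝ), ω y s / y :=
    fun s hs => (hfirst s hs).derivWithin (huniq s hs)
  set a₀ := Φ x t with ha₀def
  have ha₀ : a₀ ∈ Set.Ioo (0:ℝ) 1 := sdi_flow_mem hsol hx ht
  have hcontAt : ∀ u ∈ Set.Ico (0:ℝ) T, ∀ y : ℝ, 0 < y →
      ContinuousAt (fun z => ω z u / z) y := by
    intro u hu y hy
    exact (sdi_slice_contAt hsol hu hy).1.div continuousAt_id (ne_of_gt hy)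
  have hint : ∀ u ∈ Set.Ico (0:ℝ) T, ∀ p q : ℝ, 0 < p → 0 < q →
      IntervalIntegrable (fun z => ω z u / z) volume p q := by
    intro u hu p q hp hq
    apply ContinuousOn.intervalIntegrable
    intro y hy
    have hy0 : 0 < y := lt_of_lt_of_le (lt_min hp hq) hy.1
    exact (hcontAt u hu y hy0).continuousWithinAt
  -- derivative of the moving integral
  have hH := sdi_param_deriv hsol ht ha₀.1 (le_of_lt ha₀.2) le_rfl
  have hP := sdi_endpoint_deriv hsol hx ht
  have hHP := hH.sub hP
  have hgeq : ∀ s ∈ Set.Ico (0:ℝ) T,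
      (∫ y in (Φ x s)..(1:ℝ), ω y s / y)
        = (∫ y in a₀..(1:ℝ), ω y s / y) - (∫ y in a₀..(Φ x s), ω y s / y) := by
    intro s hs
    have has := sdi_flow_mem hsol hx hs
    have h1 : (∫ y in a₀..(Φ x s), ω y s / y) + (∫ y in (Φ x s)..(1:ℝ), ω y s / y)
        = ∫ y in a₀..(1:ℝ), ω y s / y :=
      intervalIntegral.integral_add_adjacent_intervals
        (hint s hs a₀ (Φ x s) ha₀.1 has.1)
        (hint s hs (Φ x s) 1 has.1 one_pos)
    linarith
  have hg : HasDerivWithinAt (fun s => ∫ y in (Φ x s)..(1:ℝ), ω y s / y)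
      ((∫ y in a₀..(1:ℝ), derivWithin (fun r => ω y r) (Set.Ico 0 T) t / y)
        - svel ω a₀ t * (ω a₀ t / a₀)) (Set.Ico 0 T) t :=
    hHP.congr (fun s hs => hgeq s hs) (hgeq t ht)
  -- computation of the derivative value
  set I := ∫ y in a₀..(1:ℝ), ω y t / y with hIdef
  set dω : ℝ → ℝ := fun y => deriv (fun z => ω z t) y with hdωdef
  set Fprim : ℝ → ℝ := fun y => ∫ z in y..(1:ℝ), ω z t / z with hFdef
  obtain ⟨b, hb1, hvan⟩ := sdi_vanish hsol ht
  have hFd : ∀ y : ℝ, 0 < y → HasDerivAt Fprim (-(ω y t / y)) y := by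
    intro y hy
    exact intervalIntegral.integral_hasDerivAt_left (hint t ht y 1 hy one_pos)
      (ContinuousAt.stronglyMeasurableAtFilter isOpen_Ioi
        (fun z hz => hcontAt t ht z hz) y hy)
      (hcontAt t ht y hy)
  have hdω1 : ∀ z : ℝ, b < z → (fun w => ω w t) =ᶠ[𝓝 z] fun _ => (0:ℝ) := fun z hz =>
    Filter.eventually_of_mem (isOpen_Ioi.mem_nhds hz) (fun w hw => (hvan w hw).1)
  have hdω_zero : ∀ z : ℝ, b < z → dω z = 0 := by
    intro z hz
    rw [hdωdef]
    simp only
    rw [(hdω1 z hz).deriv_eq]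
    exact deriv_const z 0
  have hvslice : ∀ y ∈ Set.Icc a₀ (1:ℝ), HasDerivAt (fun z => ω z t) (dω y) y := by
    intro y hy
    by_cases hy1 : y < 1
    · exact (sdi_slice hsol.omega_smooth ⟨lt_of_lt_of_le ha₀.1 hy.1, hy1⟩ ht).1
    · have hyb : b < y := lt_of_lt_of_le hb1 (not_lt.1 hy1)
      rw [hdω_zero y hyb]
      exact (hasDerivAt_const y (0:ℝ)).congr_of_eventuallyEq (hdω1 y hyb)
  have hdωcont : ContinuousOn dω (Set.Icc a₀ 1) := by
    intro y hy
    by_cases hy1 : y < 1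
    · exact (sdi_dx_contAt hsol ht ⟨lt_of_lt_of_le ha₀.1 hy.1, hy1⟩).continuousWithinAt
    · have hyb : b < y := lt_of_lt_of_le hb1 (not_lt.1 hy1)
      exact (Filter.EventuallyEq.continuousAt
        (Filter.eventually_of_mem (isOpen_Ioi.mem_nhds hyb)
          (fun z hz => hdω_zero z hz))).continuousWithinAt
  have hu' : IntervalIntegrable (fun y => -(ω y t / y)) volume a₀ 1 :=
    (hint t ht a₀ 1 ha₀.1 one_pos).neg
  have hv' : IntervalIntegrable dω volume a₀ 1 :=
    (hdωcont.mono (by rw [Set.uIcc_of_le (le_of_lt ha₀.2)])).intervalIntegrable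
  have hparts := intervalIntegral.integral_mul_deriv_eq_deriv_mul
    (u := Fprim) (v := fun y => ω y t) (u' := fun y => -(ω y t / y)) (v' := dω)
    (fun y hy => by
      rw [Set.uIcc_of_le (le_of_lt ha₀.2)] at hy
      exact hFd y (lt_of_lt_of_le ha₀.1 hy.1))
    (fun y hy => by
      rw [Set.uIcc_of_le (le_of_lt ha₀.2)] at hy
      exact hvslice y hy)
    hu' hv'
  have hF1 : Fprim 1 = 0 := intervalIntegral.integral_same
  have hω1 : ω 1 t = 0 := (hvan 1 hb1).1
  -- pointwise identity for the integrand
  have hWid : Set.EqOn (fun y => derivWithin (fun r => ω y r) (Set.Ico 0 T) t / y)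
      (fun y => ρ y t / y ^ 2 + Fprim y * dω y) (Set.uIcc a₀ 1) := by
    rw [Set.uIcc_of_le (le_of_lt ha₀.2)]
    intro y hy
    have hy0 : 0 < y := lt_of_lt_of_le ha₀.1 hy.1
    by_cases hy1 : y < 1
    · have hyIoo : y ∈ Set.Ioo (0:ℝ) 1 := ⟨hy0, hy1⟩
      have heq := hsol.omega_eq y hyIoo t ht.1 ht.2
      have hsvel : svel ω y t = -(y * Fprim y) := rfl
      have hW : derivWithin (fun r => ω y r) (Set.Ico 0 T) t
          = ρ y t / y - svel ω y t * dω y := by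
        rw [hdωdef]; simp only; linarith
      simp only
      rw [hW, hsvel]
      field_simp
      ring
    · have hyeq : y = 1 := le_antisymm hy.2 (not_lt.1 hy1)
      subst hyeq
      simp only
      rw [sdi_W_one hsol ht le_rfl, hF1, (hvan 1 hb1).2]
      simp
  have hiρ : IntervalIntegrable (fun y => ρ y t / y ^ 2) volume a₀ 1 := by
    apply ContinuousOn.intervalIntegrable
    intro y hy
    rw [Set.uIcc_of_le (le_of_lt ha₀.2)] at hy
    have hy0 : 0 < y := lt_of_lt_of_le ha₀.1 hy.1
    exact ((sdi_slice_contAt hsol ht hy0).2.div (continuousAt_id.pow 2)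
      (pow_ne_zero 2 (ne_of_gt hy0))).continuousWithinAt
  have hiF : ContinuousOn Fprim (Set.Icc a₀ 1) := fun y hy =>
    (hFd y (lt_of_lt_of_le ha₀.1 hy.1)).continuousAt.continuousWithinAt
  have hiFdω : IntervalIntegrable (fun y => Fprim y * dω y) volume a₀ 1 :=
    ((hiF.mul hdωcont).mono (by rw [Set.uIcc_of_le (le_of_lt ha₀.2)])).intervalIntegrable
  have hWint_eq : (∫ y in a₀..(1:ℝ), derivWithin (fun r => ω y r) (Set.Ico 0 T) t / y)
      = (∫ y in a₀..(1:ℝ), ρ y t / y ^ 2) + ∫ y in a₀..(1:ℝ), Fprim y * dω y := by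
    rw [intervalIntegral.integral_congr hWid]
    exact intervalIntegral.integral_add hiρ hiFdω
  have hsq : (∫ y in a₀..(1:ℝ), -(ω y t / y) * ω y t)
      = -∫ y in a₀..(1:ℝ), (ω y t) ^ 2 / y := by
    rw [← intervalIntegral.integral_neg]
    apply intervalIntegral.integral_congr
    intro y hy
    simp only
    ring
  have hsvel₀ : svel ω a₀ t = -(a₀ * I) := rfl
  have hFa₀ : Fprim a₀ = I := rfl
  have hval : (∫ y in a₀..(1:ℝ), derivWithin (fun r => ω y r) (Set.Ico 0 T) t / y)
      - svel ω a₀ t * (ω a₀ t / a₀)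
      = (∫ y in a₀..(1:ℝ), (ω y t) ^ 2 / y) + ∫ y in a₀..(1:ℝ), ρ y t / y ^ 2 := by
    rw [hWint_eq, hparts, hF1]
    rw [hω1, hFa₀, hsq, hsvel₀]
    have ha₀ne : a₀ ≠ 0 := ne_of_gt ha₀.1
    field_simp
    ring
  refine ⟨?_, ?_, ?_⟩
  · rw [hdW t ht]
    exact hfirst t ht
  · rw [← ha₀def] at *
    have hg2 : HasDerivWithinAt (fun s => ∫ y in (Φ x s)..(1:ℝ), ω y s / y)
        ((∫ y in a₀..(1:ℝ), (ω y t) ^ 2 / y) + ∫ y in a₀..(1:ℝ), ρ y t / y ^ 2)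
        (Set.Ico 0 T) t := hval ▸ hg
    exact hg2.congr (fun s hs => hdW s hs) (hdW t ht)
  · apply add_nonneg
    · apply intervalIntegral.integral_nonneg (le_of_lt ha₀.2)
      intro u hu
      exact div_nonneg (sq_nonneg _) (le_of_lt (lt_of_lt_of_le ha₀.1 hu.1))
    · apply intervalIntegral.integral_nonneg (le_of_lt ha₀.2)
      intro u hu
      exact div_nonneg (hsol.rho_nonneg u t) (sq_nonneg u)
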